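/- Let n ≥ 1 and N ≥ 0 be integers, and let β ∈ [0,1] be a point at which the Bernoulli polynomial B_{n+1} attains its minimum on [0,1]. If Q₁ and Q₂ are real-valued trigonometric polynomials of degree at most N with Qᵢ(x) ≤ 𝓑_{n+1}(x) for all x ∈ ℝ and ∫₀¹ (𝓑_{n+1}(x) − Qᵢ(x)) dx = −B_{n+1}(β)/(N+1)^{n+1} for i = 1, 2, then Q₁(x) = Q₂(x) for all x ∈ ℝ; that is, the extremal minorizing trigonometric polynomial of degree at most N is unique. -/

import Mathlib

open MeasureTheory

/-- The `m`-th Bernoulli polynomial evaluated at a real number `x`,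
with the generating function `t e^{xt}/(e^t - 1) = ∑ B_m(x) t^m / m!`. -/
noncomputable def bernoulliPoly (m : ℕ) (x : ℝ) : ℝ :=
  Polynomial.aeval x (Polynomial.bernoulli m)

/-- The `m`-th Bernoulli periodic function `𝓑_m(x) = B_m(x - ⌊x⌋)`. -/
noncomputable def bernoulliPer (m : ℕ) (x : ℝ) : ℝ :=
  bernoulliPoly m (x - ⌊x⌋)

/-- `f : ℝ → ℂ` is a trigonometric polynomial of degree at most `N`:
`f x = ∑_{k=-N}^{N} c_k e^{2πikx}`. -/
def IsTrigPoly (N : ℕ) (f : ℝ → ℂ) : Prop :=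
  ∃ c : ℤ → ℂ, ∀ x : ℝ,
    f x = ∑ k ∈ Finset.Icc (-(N : ℤ)) (N : ℤ),
      c k * Complex.exp (2 * (Real.pi : ℂ) * Complex.I * (k : ℂ) * (x : ℂ))


set_option maxHeartbeats 1000000

section Aux
open Complex Finset Polynomial

open Complex Finset in
noncomputable def trigSum (N : ℕ) (d : ℤ → ℂ) (z : ℂ) : ℂ :=
  ∑ k ∈ Finset.Icc (-(N : ℤ)) (N : ℤ), d k * Complex.exp (2 * (Real.pi:ℂ) * I * k * z)

open Complex Finset in
noncomputable def trigSum' (N : ℕ) (d : ℤ → ℂ) (z : ℂ) : ℂ :=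
  ∑ k ∈ Finset.Icc (-(N : ℤ)) (N : ℤ),
    d k * (2 * (Real.pi:ℂ) * I * k) * Complex.exp (2 * (Real.pi:ℂ) * I * k * z)



lemma bernoulliPoly_eq_bernoulliFun (m : ℕ) : bernoulliPoly m = bernoulliFun m := by
  funext x
  simp [bernoulliPoly, bernoulliFun, Polynomial.aeval_def, Polynomial.eval_map]

lemma hasDerivAt_bernoulliPoly (m : ℕ) (x : ℝ) :
    HasDerivAt (bernoulliPoly m) (m * bernoulliPoly (m - 1) x) x := by
  rw [bernoulliPoly_eq_bernoulliFun]
  simpa [bernoulliPoly_eq_bernoulliFun] using hasDerivAt_bernoulliFun m x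

lemma bernoulliPoly_zero (x : ℝ) : bernoulliPoly 0 x = 1 := by
  simp [bernoulliPoly]

lemma integral_bernoulliPoly {m : ℕ} (hm : m ≠ 0) :
    ∫ x in (0:ℝ)..1, bernoulliPoly m x = 0 := by
  rw [bernoulliPoly_eq_bernoulliFun]; exact integral_bernoulliFun_eq_zero hm

lemma bernoulliPoly_one_eq_zero {m : ℕ} (hm : m ≠ 1) :
    bernoulliPoly m 1 = bernoulliPoly m 0 := by
  rw [bernoulliPoly_eq_bernoulliFun]; exact bernoulliFun_endpoints_eq_of_ne_one hm

lemma bernoulliPoly_continuous (m : ℕ) : Continuous (bernoulliPoly m) := by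
  unfold bernoulliPoly
  exact Polynomial.continuous_aeval _



lemma raabe (m : ℕ) (K : ℕ) (hK : 0 < K) (y : ℝ) :
    (K:ℝ)^m * ∑ j ∈ Finset.range K, bernoulliPoly m ((y + j)/K) =
      K * bernoulliPoly m y := by
  induction m generalizing y with
  | zero => simp [bernoulliPoly_zero]
  | succ m ih =>
    have hK0 : (K:ℝ) ≠ 0 := Nat.cast_ne_zero.mpr hK.ne'
    set F : ℝ → ℝ := fun y =>
      (K:ℝ)^(m+1) * ∑ j ∈ Finset.range K, bernoulliPoly (m+1) ((y + j)/K) -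
        K * bernoulliPoly (m+1) y with hF
    have hderiv : ∀ y : ℝ, HasDerivAt F 0 y := by
      intro y
      have h1 : ∀ j ∈ Finset.range K,
          HasDerivAt (fun y => bernoulliPoly (m+1) ((y + j)/K))
            (((m:ℝ)+1) * bernoulliPoly m ((y + j)/K) / K) y := by
        intro j _
        have hin : HasDerivAt (fun y : ℝ => (y + (j:ℝ))/K) (1/K) y :=
          ((hasDerivAt_id y).add_const _).div_const K
        have := (hasDerivAt_bernoulliPoly (m+1) ((y + j)/K)).comp y hin
        simpa [div_eq_mul_inv, mul_comm, mul_assoc, mul_left_comm, Function.comp_def] using this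
      have hsum := HasDerivAt.fun_sum h1
      have h2 := ((hsum.const_mul ((K:ℝ)^(m+1))).sub
        ((hasDerivAt_bernoulliPoly (m+1) y).const_mul (K:ℝ)))
      refine h2.congr_deriv ?_
      have hterm : ∀ j : ℕ, ((m:ℝ)+1) * bernoulliPoly m ((y + j)/K) / K
          = ((m:ℝ)+1)/K * bernoulliPoly m ((y + j)/K) := fun j => by ring
      simp only [hterm, ← Finset.mul_sum, Nat.add_sub_cancel, Nat.cast_add, Nat.cast_one]
      have him := ih y
      have key : (K:ℝ)^(m+1) * (((m:ℝ)+1)/K * ∑ j ∈ Finset.range K, bernoulliPoly m ((y + j)/K))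
          = ((m:ℝ)+1) * ((K:ℝ)^m * ∑ j ∈ Finset.range K, bernoulliPoly m ((y + j)/K)) := by
        field_simp; ring
      rw [key, him]; ring
    have hconst : ∀ y : ℝ, F y = F 0 := by
      intro y
      exact is_const_of_deriv_eq_zero (fun x => (hderiv x).differentiableAt)
        (fun x => (hderiv x).deriv) y 0
    have hFint : (∫ y in (0:ℝ)..1, F y) = F 0 := by
      rw [intervalIntegral.integral_congr (g := fun _ => F 0) (fun x _ => hconst x),
        intervalIntegral.integral_const]
      norm_num
    have hcont : Continuous (bernoulliPoly (m+1)) := bernoulliPoly_continuous (m+1)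
    have hFint0 : (∫ y in (0:ℝ)..1, F y) = 0 := by
      have hint1 : ∀ j : ℕ, (∫ y in (0:ℝ)..1, bernoulliPoly (m+1) ((y + j)/K))
          = K * ∫ u in ((j:ℝ)/K)..(((j:ℝ)+1)/K), bernoulliPoly (m+1) u := by
        intro j
        have e1 : (∫ y in (0:ℝ)..1, bernoulliPoly (m+1) ((y + j)/K))
            = ∫ y in ((j:ℝ))..(1+(j:ℝ)), bernoulliPoly (m+1) (y/K) := by
          simpa using intervalIntegral.integral_comp_add_right
            (a := (0:ℝ)) (b := 1) (fun y => bernoulliPoly (m+1) (y/K)) (j:ℝ)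
        rw [e1, show (1:ℝ)+(j:ℝ) = (j:ℝ)+1 by ring]
        rw [intervalIntegral.integral_comp_div (a := (j:ℝ)) (b := (j:ℝ)+1)
          (fun u => bernoulliPoly (m+1) u) hK0]
        simp [smul_eq_mul]
      have e2 : ∑ j ∈ Finset.range K,
          (∫ u in ((j:ℝ)/K)..(((j:ℝ)+1)/K), bernoulliPoly (m+1) u)
          = ∫ u in (0:ℝ)..1, bernoulliPoly (m+1) u := by
        have h := intervalIntegral.sum_integral_adjacent_intervals (μ := volume)
          (a := fun k : ℕ => (k:ℝ)/K) (n := K) (f := bernoulliPoly (m+1))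
          (fun k _ => (hcont.intervalIntegrable _ _))
        simp only [Nat.cast_zero, zero_div] at h
        rw [div_self hK0] at h
        rw [← h]
        refine Finset.sum_congr rfl fun j _ => ?_
        norm_num
      have hintF : (∫ y in (0:ℝ)..1, F y)
          = (K:ℝ)^(m+1) * ∑ j ∈ Finset.range K,
              (∫ y in (0:ℝ)..1, bernoulliPoly (m+1) ((y + j)/K))
            - K * ∫ y in (0:ℝ)..1, bernoulliPoly (m+1) y := by
        have hi1 : ∀ j ∈ Finset.range K, IntervalIntegrable
            (fun y : ℝ => bernoulliPoly (m+1) ((y + (j:ℝ))/K)) volume 0 1 :=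
          fun j _ => ((hcont.comp
            ((continuous_id.add continuous_const).div_const _)).intervalIntegrable _ _)
        have s1 : (∫ y in (0:ℝ)..1, ∑ j ∈ Finset.range K, bernoulliPoly (m+1) ((y + j)/K))
            = ∑ j ∈ Finset.range K, ∫ y in (0:ℝ)..1, bernoulliPoly (m+1) ((y + j)/K) :=
          intervalIntegral.integral_finset_sum hi1
        have hsi : IntervalIntegrable
            (fun y : ℝ => ∑ j ∈ Finset.range K, bernoulliPoly (m+1) ((y + (j:ℝ))/K)) volume 0 1 :=
          by
          have hfe : (∑ j ∈ Finset.range K, fun y : ℝ => bernoulliPoly (m+1) ((y + (j:ℝ))/K))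
              = fun y : ℝ => ∑ j ∈ Finset.range K, bernoulliPoly (m+1) ((y + (j:ℝ))/K) := by
            funext y; simp
          exact hfe ▸ IntervalIntegrable.sum (Finset.range K) hi1
        rw [hF]
        rw [intervalIntegral.integral_sub (hsi.const_mul _)
          ((hcont.intervalIntegrable _ _).const_mul _),
          intervalIntegral.integral_const_mul, intervalIntegral.integral_const_mul, s1]
      rw [hintF]
      simp only [hint1]
      rw [← Finset.mul_sum, e2, integral_bernoulliPoly (Nat.succ_ne_zero m)]
      ring
    have hF0 : F 0 = 0 := by rw [← hFint, hFint0]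
    have := hconst y
    rw [hF0] at this
    have : F y = 0 := this
    rw [hF] at this
    linarith



lemma bernoulliPer_eq_of_mem {m : ℕ} (hm : m ≠ 1) {x : ℝ} (hx : x ∈ Set.Icc (0:ℝ) 1) :
    bernoulliPer m x = bernoulliPoly m x := by
  rcases eq_or_lt_of_le hx.2 with h1 | h1
  · have : ⌊x⌋ = 1 := by rw [h1]; exact Int.floor_one
    rw [bernoulliPer, this, h1]
    norm_num
    exact (bernoulliPoly_one_eq_zero hm).symm
  · have : ⌊x⌋ = 0 := Int.floor_eq_zero_iff.mpr ⟨hx.1, h1⟩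
    rw [bernoulliPer, this]
    norm_num

lemma hasDerivAt_bernoulliPer (m : ℕ) {x : ℝ} (hx : (⌊x⌋ : ℝ) < x) :
    HasDerivAt (bernoulliPer m) (m * bernoulliPoly (m - 1) (x - ⌊x⌋)) x := by
  set c : ℝ := (⌊x⌋ : ℝ)
  have hd : HasDerivAt (fun y : ℝ => bernoulliPoly m (y - c))
      (m * bernoulliPoly (m - 1) (x - c)) x := by
    have hin : HasDerivAt (fun y : ℝ => y - c) 1 x := (hasDerivAt_id x).sub_const c
    simpa [Function.comp_def] using (hasDerivAt_bernoulliPoly m (x - c)).comp x hin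
  apply hd.congr_of_eventuallyEq
  have hmem : x ∈ Set.Ioo c (c + 1) := ⟨hx, by show x < (⌊x⌋:ℝ) + 1; exact_mod_cast Int.lt_floor_add_one x⟩
  filter_upwards [Ioo_mem_nhds hmem.1 hmem.2] with y hy
  have : ⌊y⌋ = ⌊x⌋ := by
    rw [Int.floor_eq_iff]
    constructor
    · exact le_of_lt hy.1
    · simpa using hy.2
  rw [bernoulliPer, this]

lemma integral_bernoulliPer {m : ℕ} (hm : m ≠ 0) :
    ∫ x in (0:ℝ)..1, bernoulliPer m x = 0 := by
  conv_rhs => rw [← integral_bernoulliPoly hm]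
  apply intervalIntegral.integral_congr_ae
  have h1 : ∀ᵐ y : ℝ, y ≠ 1 := by
    have : (volume : Measure ℝ) {(1:ℝ)} = 0 := Real.volume_singleton
    exact (MeasureTheory.measure_eq_zero_iff_ae_notMem.mp this).mono fun y hy => by simpa using hy
  filter_upwards [h1] with y hy hmem
  rw [Set.uIoc_of_le (by norm_num : (0:ℝ) ≤ 1)] at hmem
  have hfl : ⌊y⌋ = 0 := Int.floor_eq_zero_iff.mpr ⟨le_of_lt hmem.1, lt_of_le_of_ne hmem.2 hy⟩
  rw [bernoulliPer, hfl]
  norm_num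

lemma intervalIntegrable_bernoulliPer (m : ℕ) (a b : ℝ) :
    IntervalIntegrable (bernoulliPer m) volume a b := by
  have h1 : ∀ x : ℝ, |bernoulliPer m x| ≤ (sSup ((fun y => |bernoulliPoly m y|) '' Set.Icc 0 1)) := by
    intro x
    apply le_csSup
    · exact (isCompact_Icc.image_of_continuousOn
        ((bernoulliPoly_continuous m).abs.continuousOn)).bddAbove
    · exact ⟨x - ⌊x⌋, ⟨by simp [Int.floor_le], by
        simpa [Int.self_sub_floor] using (Int.fract_lt_one x).le⟩, rfl⟩
  have hmeas : Measurable (bernoulliPer m) :=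
    (bernoulliPoly_continuous m).measurable.comp measurable_fract
  rw [intervalIntegrable_iff]
  have : IsFiniteMeasure (volume.restrict (Set.uIoc a b)) := by
    constructor
    rw [Measure.restrict_apply_univ]
    exact measure_Ioc_lt_top
  refine MeasureTheory.Integrable.mono'
    (MeasureTheory.integrable_const (sSup ((fun y => |bernoulliPoly m y|) '' Set.Icc 0 1)))
    hmeas.aestronglyMeasurable ?_
  exact Filter.Eventually.of_forall fun x => by simpa using h1 x


lemma exp_two_pi_int (k : ℤ) : Complex.exp (2 * (Real.pi:ℂ) * I * k) = 1 := by
  rw [show 2 * (Real.pi:ℂ) * I * k = k * (2 * Real.pi * I) by ring]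
  exact Complex.exp_int_mul_two_pi_mul_I k

lemma two_pi_I_ne_zero' : 2 * (Real.pi:ℂ) * I ≠ 0 := by
  simp [Real.pi_ne_zero, I_ne_zero]

lemma integral_exp_int {k : ℤ} (hk : k ≠ 0) :
    (∫ x in (0:ℝ)..1, Complex.exp (2 * (Real.pi:ℂ) * I * k * x)) = 0 := by
  have hc : (2 * (Real.pi:ℂ) * I * k) ≠ 0 := by
    apply mul_ne_zero two_pi_I_ne_zero'
    exact_mod_cast hk
  rw [integral_exp_mul_complex hc]
  rw [show (2 * (Real.pi:ℂ) * I * k) * (1:ℝ) = 2 * (Real.pi:ℂ) * I * k by push_cast; ring]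
  rw [exp_two_pi_int]
  simp

lemma sum_exp_int {N : ℕ} {k : ℤ} (hk : k ≠ 0) (hk2 : |k| ≤ (N:ℤ)) (t : ℝ) :
    ∑ j ∈ Finset.range (N+1),
      Complex.exp (2 * (Real.pi:ℂ) * I * k * ((t + (j:ℝ)/((N:ℝ)+1) : ℝ) : ℂ)) = 0 := by
  set K : ℕ := N + 1
  set ζ : ℂ := Complex.exp (2 * (Real.pi:ℂ) * I * k / K) with hζ
  have hterm : ∀ j : ℕ, Complex.exp (2 * (Real.pi:ℂ) * I * k * ((t + (j:ℝ)/((N:ℝ)+1) : ℝ) : ℂ))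
      = Complex.exp (2 * (Real.pi:ℂ) * I * k * t) * ζ ^ j := by
    intro j
    rw [hζ, ← Complex.exp_nat_mul, ← Complex.exp_add]
    congr 1
    have : ((N:ℂ) + 1) ≠ 0 := fun h => by exact_mod_cast h
    push_cast
    field_simp
    have hKN : ((K:ℕ):ℂ) = (N:ℂ) + 1 := Nat.cast_succ N
    have hK1 : ((K:ℕ):ℂ) * ((K:ℕ):ℂ)⁻¹ = 1 := mul_inv_cancel₀ (by rw [hKN]; exact this)
    linear_combination (-(j:ℂ)) * hK1 + (j:ℂ) * ((K:ℕ):ℂ)⁻¹ * hKN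
  simp only [hterm, ← Finset.mul_sum]
  have hζK : ζ ^ K = 1 := by
    rw [hζ, ← Complex.exp_nat_mul]
    rw [show (K:ℂ) * (2 * (Real.pi:ℂ) * I * k / K) = 2 * (Real.pi:ℂ) * I * k by
      field_simp; exact div_self (Nat.cast_ne_zero.mpr (Nat.succ_ne_zero N))]
    exact exp_two_pi_int k
  have hKc : (K:ℂ) ≠ 0 := by
    intro h
    have h2 : K = 0 := by exact_mod_cast h
    omega
  have hζ1 : ζ ≠ 1 := by
    intro h
    rw [hζ, Complex.exp_eq_one_iff] at h
    obtain ⟨m, hm⟩ := h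
    rw [div_eq_iff hKc] at hm
    have : (k : ℂ) = m * K := by
      have h2 : (k:ℂ) * (2 * (Real.pi:ℂ) * I) = (m * K) * (2 * (Real.pi:ℂ) * I) := by
        rw [show (k:ℂ) * (2 * (Real.pi:ℂ) * I) = 2 * (Real.pi:ℂ) * I * k by ring, hm]
        ring
      exact mul_right_cancel₀ two_pi_I_ne_zero' h2
    have hkm : k = m * K := by exact_mod_cast this
    rcases eq_or_ne m 0 with h | h
    · exact hk (by simp [hkm, h])
    · have : (K:ℤ) ≤ |k| := by
        rw [hkm, abs_mul]
        have : 1 ≤ |m| := Int.one_le_abs h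
        nlinarith [abs_nonneg (m:ℤ), abs_of_nonneg (by positivity : (0:ℤ) ≤ (K:ℤ))]
      omega
  rw [geom_sum_eq hζ1, hζK]
  simp

lemma quadrature {N : ℕ} {Q : ℝ → ℝ} {c : ℤ → ℂ}
    (hc : ∀ x : ℝ, (Q x : ℂ) = ∑ k ∈ Finset.Icc (-(N : ℤ)) (N : ℤ),
      c k * Complex.exp (2 * (Real.pi : ℂ) * Complex.I * (k : ℂ) * (x : ℂ)))
    (t : ℝ) :
    ((N:ℝ) + 1) * ∫ x in (0:ℝ)..1, Q x = ∑ j ∈ Finset.range (N+1), Q (t + (j:ℝ)/((N:ℝ)+1)) := by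
  have hint : (∫ x in (0:ℝ)..1, (Q x : ℂ)) = c 0 := by
    have : (∫ x in (0:ℝ)..1, (Q x : ℂ))
        = ∑ k ∈ Finset.Icc (-(N : ℤ)) (N : ℤ),
          ∫ x in (0:ℝ)..1, c k * Complex.exp (2 * (Real.pi : ℂ) * I * (k : ℂ) * (x : ℂ)) := by
      rw [← intervalIntegral.integral_finset_sum]
      · exact intervalIntegral.integral_congr fun x _ => hc x
      · intro k _
        apply Continuous.intervalIntegrable
        exact continuous_const.mul (Complex.continuous_exp.comp (by continuity))
    rw [this]
    rw [Finset.sum_eq_single 0]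
    · rw [intervalIntegral.integral_const_mul]
      simp
    · intro k _ hk
      rw [intervalIntegral.integral_const_mul, integral_exp_int hk]
      ring
    · intro h
      simp at h
  have hsum : (∑ j ∈ Finset.range (N+1), ((Q (t + (j:ℝ)/((N:ℝ)+1)) : ℂ)))
      = ((N:ℝ)+1) * c 0 := by
    have : ∀ j : ℕ, ((Q (t + (j:ℝ)/((N:ℝ)+1)) : ℂ))
        = ∑ k ∈ Finset.Icc (-(N : ℤ)) (N : ℤ),
          c k * Complex.exp (2 * (Real.pi : ℂ) * I * (k : ℂ) * ((t + (j:ℝ)/((N:ℝ)+1) : ℝ) : ℂ)) :=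
      fun j => hc _
    simp only [this]
    rw [Finset.sum_comm]
    rw [Finset.sum_eq_single 0]
    · simp [Finset.mul_sum, mul_comm]
    · intro k _ hk
      rw [← Finset.mul_sum, sum_exp_int hk]
      · ring
      · rw [abs_le]; exact Finset.mem_Icc.mp ‹k ∈ Finset.Icc (-(N:ℤ)) (N:ℤ)›
    · intro h
      simp at h
  have key : (((((N:ℝ)+1) * ∫ x in (0:ℝ)..1, Q x : ℝ)) : ℂ)
      = ((∑ j ∈ Finset.range (N+1), Q (t + (j:ℝ)/((N:ℝ)+1)) : ℝ) : ℂ) := by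
    push_cast
    rw [← intervalIntegral.integral_ofReal, hint, hsum]
    norm_cast
  exact_mod_cast key

lemma trig_continuous {N : ℕ} {Q : ℝ → ℝ} {c : ℤ → ℂ}
    (hc : ∀ x : ℝ, (Q x : ℂ) = ∑ k ∈ Finset.Icc (-(N : ℤ)) (N : ℤ),
      c k * Complex.exp (2 * (Real.pi : ℂ) * Complex.I * (k : ℂ) * (x : ℂ))) :
    Continuous Q := by
  have : Q = fun x : ℝ => (∑ k ∈ Finset.Icc (-(N : ℤ)) (N : ℤ),
      c k * Complex.exp (2 * (Real.pi : ℂ) * Complex.I * (k : ℂ) * (x : ℂ))).re := by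
    funext x
    rw [← hc x]
    simp
  rw [this]
  apply Complex.continuous_re.comp
  apply continuous_finset_sum
  intro k _
  exact continuous_const.mul (Complex.continuous_exp.comp (by continuity))




lemma hasDerivAt_cexp_mul (a : ℂ) (z : ℂ) :
    HasDerivAt (fun z => Complex.exp (a * z)) (a * Complex.exp (a * z)) z := by
  have h1 : HasDerivAt (fun z : ℂ => a * z) a z := by
    simpa using (hasDerivAt_id z).const_mul a
  simpa [mul_comm, Function.comp_def] using (Complex.hasDerivAt_exp (a * z)).comp z h1

lemma hasDerivAt_trigSum (N : ℕ) (d : ℤ → ℂ) (z : ℂ) :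
    HasDerivAt (trigSum N d) (trigSum' N d z) z := by
  apply HasDerivAt.fun_sum
  intro k _
  simpa [mul_comm, mul_assoc, mul_left_comm] using
    (hasDerivAt_cexp_mul (2 * (Real.pi:ℂ) * I * k) z).const_mul (d k)

/-- The main zero-counting lemma. -/
lemma trigSum_eq_zero (N : ℕ) (d : ℤ → ℂ) (x : ℕ → ℝ)
    (hdist : ∀ j ∈ Finset.range (N+1), ∀ l ∈ Finset.range (N+1),
      (∃ m : ℤ, x j - x l = m) → j = l)
    (hzero : ∀ j ∈ Finset.range (N+1), trigSum N d (x j) = 0)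
    (hderiv : ∀ j ∈ Finset.range (N+1), ((⌊x j⌋ : ℝ) < x j) → trigSum' N d (x j) = 0) :
    ∀ y : ℝ, trigSum N d y = 0 := by
  classical
  set P : Polynomial ℂ := ∑ k ∈ Finset.Icc (-(N : ℤ)) (N : ℤ),
    Polynomial.C (d k) * Polynomial.X ^ (k + N).toNat with hP
  -- evaluation identity
  have heval : ∀ z : ℂ, P.eval (Complex.exp (2 * (Real.pi:ℂ) * I * z))
      = Complex.exp (2 * (Real.pi:ℂ) * I * N * z) * trigSum N d z := by
    intro z
    rw [hP, Polynomial.eval_finset_sum, trigSum, Finset.mul_sum]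
    refine Finset.sum_congr rfl fun k hk => ?_
    rw [Finset.mem_Icc] at hk
    rw [Polynomial.eval_mul, Polynomial.eval_C, Polynomial.eval_pow, Polynomial.eval_X]
    rw [← Complex.exp_nat_mul]
    have h1 : (((k + N).toNat : ℂ)) = (k : ℂ) + N := by
      have := Int.toNat_of_nonneg (by linarith [hk.1] : (0:ℤ) ≤ k + N)
      exact_mod_cast congrArg (Int.cast : ℤ → ℂ) this
    rw [show (((k + N).toNat :ℕ) : ℂ) * (2 * (Real.pi:ℂ) * I * z)
        = (((k + N).toNat :ℕ) : ℂ) * (2 * (Real.pi:ℂ) * I) * z by ring, h1]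
    rw [show ((k:ℂ) + N) * (2 * (Real.pi:ℂ) * I) * z
        = 2 * (Real.pi:ℂ) * I * N * z + 2 * (Real.pi:ℂ) * I * k * z by ring]
    rw [Complex.exp_add]
    ring
  -- the polynomial is zero
  have hPzero : P = 0 := by
    by_contra hP0
    set z : ℕ → ℂ := fun j => Complex.exp (2 * (Real.pi:ℂ) * I * (x j)) with hz
    -- injectivity on range
    have hinj : ∀ j ∈ Finset.range (N+1), ∀ l ∈ Finset.range (N+1), z j = z l → j = l := by
      intro j hj l hl hzz
      apply hdist j hj l hl
      rw [hz] at hzz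
      simp only at hzz
      have := Complex.exp_eq_exp_iff_exists_int.mp hzz
      obtain ⟨m, hm⟩ := this
      refine ⟨m, ?_⟩
      have h2 : (2 * (Real.pi:ℂ) * I) * ((x j : ℂ) - (x l : ℂ) - m) = 0 := by
        rw [mul_sub, mul_sub, hm]; ring
      rcases mul_eq_zero.mp h2 with h | h
      · exact absurd h (by simp [Real.pi_ne_zero, I_ne_zero])
      · have : (x j : ℂ) - (x l : ℂ) = (m : ℂ) := by linear_combination h
        exact_mod_cast this
    -- roots
    have hroot : ∀ j ∈ Finset.range (N+1), P.IsRoot (z j) := by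
      intro j hj
      rw [Polynomial.IsRoot, hz]
      simp only
      rw [show (2 * (Real.pi:ℂ) * I * (x j)) = 2 * (Real.pi:ℂ) * I * ((x j : ℝ) : ℂ) by norm_num]
      rw [heval ((x j : ℝ) : ℂ)]
      rw [hzero j hj, mul_zero]
    -- derivative of eval along exp, over ℂ
    have hC : ∀ w : ℂ, HasDerivAt (fun w => P.eval (Complex.exp (2 * (Real.pi:ℂ) * I * w)))
        (P.derivative.eval (Complex.exp (2 * (Real.pi:ℂ) * I * w)) *
          (2 * (Real.pi:ℂ) * I * Complex.exp (2 * (Real.pi:ℂ) * I * w))) w := by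
      intro w
      exact (P.hasDerivAt _).comp w (hasDerivAt_cexp_mul (2 * (Real.pi:ℂ) * I) w)
    have hG : ∀ w : ℂ, HasDerivAt (fun w : ℂ => Complex.exp (2 * (Real.pi:ℂ) * I * N * w) * trigSum N d w)
        ((2 * (Real.pi:ℂ) * I * N) * Complex.exp (2 * (Real.pi:ℂ) * I * N * w) * trigSum N d w
          + Complex.exp (2 * (Real.pi:ℂ) * I * N * w) * trigSum' N d w) w := by
      intro w
      exact (hasDerivAt_cexp_mul (2 * (Real.pi:ℂ) * I * N) w).mul (hasDerivAt_trigSum N d w)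
    have hfun : (fun w : ℂ => Complex.exp (2 * (Real.pi:ℂ) * I * N * w) * trigSum N d w)
        = fun w => P.eval (Complex.exp (2 * (Real.pi:ℂ) * I * w)) :=
      funext fun w => (heval w).symm
    have hroot' : ∀ j ∈ Finset.range (N+1), ((⌊x j⌋ : ℝ) < x j) →
        P.derivative.IsRoot (z j) := by
      intro j hj hgood
      have h1 := hC ((x j : ℝ) : ℂ)
      have h2 := hG ((x j : ℝ) : ℂ)
      rw [hfun] at h2
      have h3 := h1.unique h2
      rw [hzero j hj, hderiv j hj hgood] at h3
      simp only [mul_zero, add_zero, zero_add] at h3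
      have h4 : P.derivative.eval (z j) * (2 * (Real.pi:ℂ) * I * z j) = 0 := by
        rw [hz]; simpa using h3
      rcases mul_eq_zero.mp h4 with h | h
      · exact h
      · exfalso
        rcases mul_eq_zero.mp h with h' | h'
        · exact (by simp [Real.pi_ne_zero, I_ne_zero] : (2 * (Real.pi:ℂ) * I) ≠ 0) h'
        · exact Complex.exp_ne_zero _ h'
    -- degree bound
    have hdeg : P.natDegree ≤ 2*N := by
      rw [hP]
      apply Polynomial.natDegree_sum_le_of_forall_le
      intro k hk
      rw [Finset.mem_Icc] at hk
      calc (Polynomial.C (d k) * Polynomial.X ^ (k + N).toNat).natDegree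
          ≤ (Polynomial.X ^ (k + N).toNat : Polynomial ℂ).natDegree :=
            Polynomial.natDegree_C_mul_le _ _
        _ = (k + N).toNat := by simp
        _ ≤ 2*N := by omega
    -- the bad set
    set B : Finset ℕ := (Finset.range (N+1)).filter (fun j => (⌊x j⌋ : ℝ) = x j) with hB
    have hB1 : B.card ≤ 1 := by
      rw [Finset.card_le_one]
      intro j hj l hl
      rw [hB, Finset.mem_filter] at hj hl
      apply hdist j hj.1 l hl.1
      exact ⟨⌊x j⌋ - ⌊x l⌋, by rw [Int.cast_sub, hj.2, hl.2]⟩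
    have hc1 : ∀ j ∈ Finset.range (N+1), 1 ≤ P.roots.count (z j) := by
      intro j hj
      rw [Polynomial.count_roots]
      exact (Polynomial.rootMultiplicity_pos hP0).mpr (hroot j hj)
    have hc2 : ∀ j ∈ (Finset.range (N+1)) \ B, 2 ≤ P.roots.count (z j) := by
      intro j hj
      rw [Finset.mem_sdiff, hB, Finset.mem_filter] at hj
      have hgood : (⌊x j⌋ : ℝ) < x j :=
        lt_of_le_of_ne (Int.floor_le (x j)) (fun h => hj.2 ⟨hj.1, h⟩)
      rw [Polynomial.count_roots]
      exact (Polynomial.one_lt_rootMultiplicity_iff_isRoot hP0).mpr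
        ⟨hroot j hj.1, hroot' j hj.1 hgood⟩
    -- counting
    have himage : (Finset.range (N+1)).image z ⊆ P.roots.toFinset := by
      intro a ha
      rw [Finset.mem_image] at ha
      obtain ⟨j, hj, rfl⟩ := ha
      rw [Multiset.mem_toFinset, ← Multiset.count_pos]
      exact lt_of_lt_of_le one_pos (by exact_mod_cast hc1 j hj)
    have hsum_eq : ∑ a ∈ (Finset.range (N+1)).image z, P.roots.count a
        = ∑ j ∈ Finset.range (N+1), P.roots.count (z j) :=
      Finset.sum_image fun j hj l hl h => hinj j hj l hl h
    have hupper : ∑ j ∈ Finset.range (N+1), P.roots.count (z j) ≤ 2*N := by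
      rw [← hsum_eq]
      calc ∑ a ∈ (Finset.range (N+1)).image z, P.roots.count a
          ≤ ∑ a ∈ P.roots.toFinset, P.roots.count a :=
            Finset.sum_le_sum_of_subset himage
        _ = Multiset.card P.roots := Multiset.toFinset_sum_count_eq _
        _ ≤ P.natDegree := Polynomial.card_roots' P
        _ ≤ 2*N := hdeg
    have hlower : 2*N + 1 ≤ ∑ j ∈ Finset.range (N+1), P.roots.count (z j) := by
      have hBsub : B ⊆ Finset.range (N+1) := Finset.filter_subset _ _
      rw [← Finset.sum_sdiff hBsub]
      have h1 : ((Finset.range (N+1)) \ B).card * 2 ≤ ∑ j ∈ (Finset.range (N+1)) \ B, P.roots.count (z j) := by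
        calc ((Finset.range (N+1)) \ B).card * 2 = ∑ _j ∈ (Finset.range (N+1)) \ B, 2 := by
              rw [Finset.sum_const]; ring
          _ ≤ _ := Finset.sum_le_sum hc2
      have h2 : B.card ≤ ∑ j ∈ B, P.roots.count (z j) := by
        calc B.card = ∑ _j ∈ B, 1 := by rw [Finset.sum_const]; ring
          _ ≤ _ := Finset.sum_le_sum (fun j hj => hc1 j (hBsub hj))
      have h3 : ((Finset.range (N+1)) \ B).card = (N+1) - B.card := by
        rw [Finset.card_sdiff_of_subset hBsub, Finset.card_range]
      have h4 : B.card ≤ N+1 := by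
        calc B.card ≤ (Finset.range (N+1)).card := Finset.card_le_card hBsub
          _ = N+1 := Finset.card_range _
      omega
    omega
  intro y
  have h1 := heval ((y : ℝ) : ℂ)
  rw [hPzero] at h1
  simp only [Polynomial.eval_zero] at h1
  rcases (mul_eq_zero.mp h1.symm) with h | h
  · exact absurd h (Complex.exp_ne_zero _)
  · exact h

end Aux

open Complex Finset in
theorem extremal_minorant_unique (n N : ℕ) (hn : 1 ≤ n)
    (β : ℝ) (hβmem : β ∈ Set.Icc (0 : ℝ) 1)
    (hβ : ∀ x ∈ Set.Icc (0 : ℝ) 1, bernoulliPoly (n + 1) β ≤ bernoulliPoly (n + 1) x)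
    (Q₁ Q₂ : ℝ → ℝ)
    (hQ₁trig : IsTrigPoly N (fun x => (Q₁ x : ℂ)))
    (hQ₂trig : IsTrigPoly N (fun x => (Q₂ x : ℂ)))
    (hQ₁le : ∀ x : ℝ, Q₁ x ≤ bernoulliPer (n + 1) x)
    (hQ₂le : ∀ x : ℝ, Q₂ x ≤ bernoulliPer (n + 1) x)
    (hQ₁int : (∫ x in (0 : ℝ)..1, (bernoulliPer (n + 1) x - Q₁ x)) =
      -(bernoulliPoly (n + 1) β) / ((N : ℝ) + 1) ^ (n + 1))
    (hQ₂int : (∫ x in (0 : ℝ)..1, (bernoulliPer (n + 1) x - Q₂ x)) =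
      -(bernoulliPoly (n + 1) β) / ((N : ℝ) + 1) ^ (n + 1)) :
    ∀ x : ℝ, Q₁ x = Q₂ x := by
  obtain ⟨c₁, hc₁⟩ := hQ₁trig
  obtain ⟨c₂, hc₂⟩ := hQ₂trig
  set m : ℕ := n + 1 with hm
  have hm1 : m ≠ 1 := by omega
  have hm0 : m ≠ 0 := by omega
  set KR : ℝ := (N:ℝ) + 1 with hKR
  have hKR0 : KR ≠ 0 := by positivity
  have hKRm : KR ^ m ≠ 0 := by positivity
  set x : ℕ → ℝ := fun j => (β + j)/KR with hx
  have hxmem : ∀ j ∈ Finset.range (N+1), x j ∈ Set.Icc (0:ℝ) 1 := by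
    intro j hj
    rw [Finset.mem_range] at hj
    constructor
    · apply div_nonneg _ (by positivity)
      have := hβmem.1
      positivity
    · rw [div_le_one (by positivity)]
      have h1 : (j:ℝ) ≤ N := by exact_mod_cast Nat.lt_succ_iff.mp hj
      have := hβmem.2
      simp only [hKR]
      linarith
  -- key point evaluation: for both i
  have key : ∀ (Q : ℝ → ℝ) (c : ℤ → ℂ),
      (∀ x : ℝ, (Q x : ℂ) = ∑ k ∈ Finset.Icc (-(N : ℤ)) (N : ℤ),
        c k * Complex.exp (2 * (Real.pi : ℂ) * Complex.I * (k : ℂ) * (x : ℂ))) →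
      (∀ x : ℝ, Q x ≤ bernoulliPer m x) →
      ((∫ y in (0 : ℝ)..1, (bernoulliPer m y - Q y)) =
        -(bernoulliPoly m β) / KR ^ m) →
      ∀ j ∈ Finset.range (N+1), Q (x j) = bernoulliPer m (x j) := by
    intro Q c hc hle hint
    have hQc : Continuous Q := trig_continuous hc
    have hsplit : (∫ y in (0 : ℝ)..1, (bernoulliPer m y - Q y))
        = (∫ y in (0 : ℝ)..1, bernoulliPer m y) - ∫ y in (0 : ℝ)..1, Q y :=
      intervalIntegral.integral_sub (intervalIntegrable_bernoulliPer m 0 1)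
        (hQc.intervalIntegrable _ _)
    have hQint : (∫ y in (0 : ℝ)..1, Q y) = bernoulliPoly m β / KR ^ m := by
      rw [hsplit, integral_bernoulliPer hm0] at hint
      rw [neg_div] at hint
      linarith
    have hquad := quadrature hc (β/KR)
    have hxj : ∀ j : ℕ, β/KR + (j:ℝ)/((N:ℝ)+1) = x j := by
      intro j; rw [hx, hKR]; ring
    rw [hQint] at hquad
    simp only [hxj] at hquad
    -- sum of B at nodes
    have hraabe := raabe m (N+1) (Nat.succ_pos N) β
    have hcast : ((N+1 : ℕ):ℝ) = KR := by push_cast; rw [hKR]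
    rw [hcast] at hraabe
    have hBsum : ∑ j ∈ Finset.range (N+1), bernoulliPoly m (x j) = KR * bernoulliPoly m β / KR ^ m := by
      rw [eq_div_iff hKRm]
      have : ∀ j : ℕ, x j = (β + j)/KR := fun j => rfl
      rw [mul_comm]
      simpa [this] using hraabe
    have hPsum : ∑ j ∈ Finset.range (N+1), bernoulliPer m (x j)
        = ∑ j ∈ Finset.range (N+1), bernoulliPoly m (x j) :=
      Finset.sum_congr rfl fun j hj => bernoulliPer_eq_of_mem hm1 (hxmem j hj)
    -- total defect is zero
    have hzero : ∑ j ∈ Finset.range (N+1), (bernoulliPer m (x j) - Q (x j)) = 0 := by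
      rw [Finset.sum_sub_distrib, hPsum, hBsum, ← hquad, hKR]
      field_simp
      simp
    have hterm := (Finset.sum_eq_zero_iff_of_nonneg
      (fun j _ => sub_nonneg.mpr (hle (x j)))).mp hzero
    intro j hj
    have := hterm j hj
    linarith [this]
  have hkey₁ := key Q₁ c₁ hc₁ hQ₁le (by rw [hQ₁int])
  have hkey₂ := key Q₂ c₂ hc₂ hQ₂le (by rw [hQ₂int])
  -- derivatives agree at good nodes
  set d : ℤ → ℂ := fun k => c₁ k - c₂ k with hd
  have hdsum : ∀ y : ℝ, trigSum N d y = ((Q₁ y : ℂ) - (Q₂ y : ℂ)) := by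
    intro y
    have e1 : ((Q₁ y : ℝ) : ℂ) = ∑ k ∈ Finset.Icc (-(N : ℤ)) (N : ℤ),
        c₁ k * Complex.exp (2 * (Real.pi : ℂ) * Complex.I * (k : ℂ) * (y : ℂ)) := hc₁ y
    have e2 : ((Q₂ y : ℝ) : ℂ) = ∑ k ∈ Finset.Icc (-(N : ℤ)) (N : ℤ),
        c₂ k * Complex.exp (2 * (Real.pi : ℂ) * Complex.I * (k : ℂ) * (y : ℂ)) := hc₂ y
    rw [trigSum, e1, e2, ← Finset.sum_sub_distrib]
    exact Finset.sum_congr rfl fun k _ => by rw [hd]; ring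
  have hQderiv : ∀ (Q : ℝ → ℝ) (c : ℤ → ℂ),
      (∀ x : ℝ, (Q x : ℂ) = ∑ k ∈ Finset.Icc (-(N : ℤ)) (N : ℤ),
        c k * Complex.exp (2 * (Real.pi : ℂ) * Complex.I * (k : ℂ) * (x : ℂ))) →
      ∀ y : ℝ, HasDerivAt Q ((trigSum' N c y).re) y := by
    intro Q c hc y
    have h1 : HasDerivAt (trigSum N c) (trigSum' N c ((y:ℝ):ℂ)) ((y:ℝ):ℂ) :=
      hasDerivAt_trigSum N c _
    have h2 := h1.real_of_complex
    have hfun : (fun x : ℝ => (trigSum N c x).re) = Q := by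
      funext t
      have e : ((Q t : ℝ) : ℂ) = ∑ k ∈ Finset.Icc (-(N : ℤ)) (N : ℤ),
          c k * Complex.exp (2 * (Real.pi : ℂ) * Complex.I * (k : ℂ) * (t : ℂ)) := hc t
      rw [show trigSum N c ((t:ℝ):ℂ) = ((Q t : ℝ):ℂ) by rw [trigSum, e]]
      simp
    rwa [hfun] at h2
  have hderiv_eq : ∀ j ∈ Finset.range (N+1), ((⌊x j⌋ : ℝ) < x j) →
      (trigSum' N c₁ (x j)).re = (trigSum' N c₂ (x j)).re := by
    intro j hj hgood
    have hBder := hasDerivAt_bernoulliPer m hgood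
    have hmin : ∀ (Q : ℝ → ℝ) (dv : ℝ), (∀ t, Q t ≤ bernoulliPer m t) →
        Q (x j) = bernoulliPer m (x j) → HasDerivAt Q dv (x j) →
        dv = (m:ℝ) * bernoulliPoly (m - 1) (x j - ⌊x j⌋) := by
      intro Q dv hle heq hQd
      have hloc : IsLocalMin (fun t => bernoulliPer m t - Q t) (x j) := by
        apply Filter.Eventually.of_forall
        intro t
        simp only []
        have := hle t
        have := hle (x j)
        rw [heq]
        simp
        linarith [hle t]
      have := hloc.hasDerivAt_eq_zero (hBder.sub hQd)
      linarith [this]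
    have h1 := hmin Q₁ _ hQ₁le (hkey₁ j hj) (hQderiv Q₁ c₁ hc₁ (x j))
    have h2 := hmin Q₂ _ hQ₂le (hkey₂ j hj) (hQderiv Q₂ c₂ hc₂ (x j))
    rw [h1, h2]
  -- trigSum' of difference is zero at good nodes
  have hderiv0 : ∀ j ∈ Finset.range (N+1), ((⌊x j⌋ : ℝ) < x j) →
      trigSum' N d (x j) = 0 := by
    intro j hj hgood
    have hD : HasDerivAt (fun t : ℝ => Q₁ t - Q₂ t) 0 (x j) := by
      have h1 := hQderiv Q₁ c₁ hc₁ (x j)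
      have h2 := hQderiv Q₂ c₂ hc₂ (x j)
      have := h1.sub h2
      rwa [hderiv_eq j hj hgood, sub_self] at this
    have hDc : HasDerivAt (fun t : ℝ => ((Q₁ t - Q₂ t : ℝ) : ℂ)) 0 (x j) := by
      simpa using hD.ofReal_comp
    have hS : HasDerivAt (fun t : ℝ => trigSum N d t) (trigSum' N d (x j)) (x j) :=
      (hasDerivAt_trigSum N d _).comp_ofReal
    have hfun : (fun t : ℝ => trigSum N d t) = fun t : ℝ => ((Q₁ t - Q₂ t : ℝ) : ℂ) := by
      funext t; rw [hdsum t]; push_cast; ring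
    rw [hfun] at hS
    exact hS.unique hDc
  -- zero at all nodes
  have hzero : ∀ j ∈ Finset.range (N+1), trigSum N d (x j) = 0 := by
    intro j hj
    rw [hdsum, hkey₁ j hj, hkey₂ j hj]
    ring
  -- distinctness
  have hdist : ∀ j ∈ Finset.range (N+1), ∀ l ∈ Finset.range (N+1),
      (∃ mm : ℤ, x j - x l = mm) → j = l := by
    intro j hj l hl ⟨mm, hmm⟩
    rw [Finset.mem_range] at hj hl
    rw [hx] at hmm
    simp only [] at hmm
    have h1 : ((j:ℝ) - l)/KR = mm := by rw [← hmm]; ring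
    have h2 : (j:ℝ) - l = mm * KR := by
      field_simp at h1
      linarith [h1]
    have h3 : (j:ℤ) - l = mm * (N+1) := by
      have : ((j:ℤ) - l : ℤ) = ((mm * (N+1) : ℤ) : ℤ) := by
        exact_mod_cast (by push_cast [hKR] at h2 ⊢; linarith [h2] : ((j:ℝ) - l) = ((mm * (N+1) : ℤ) : ℝ))
      exact this
    rcases eq_or_ne mm 0 with h | h
    · rw [h, zero_mul] at h3; omega
    · exfalso
      have hmm1 : 1 ≤ |mm| := Int.one_le_abs h
      have habs : |(j:ℤ) - l| = |mm| * (N+1) := by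
        rw [h3, abs_mul, abs_of_nonneg (by positivity : (0:ℤ) ≤ (N:ℤ)+1)]
      have hle : |(j:ℤ) - l| ≤ N := by rw [abs_le]; omega
      nlinarith
  have hfinal := trigSum_eq_zero N d x hdist hzero hderiv0
  intro y
  have := hfinal y
  rw [hdsum y] at this
  have : ((Q₁ y : ℝ) : ℂ) = ((Q₂ y : ℝ) : ℂ) := by linear_combination this
  exact_mod_cast this
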